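/- The q-binomial theorem specialization: as formal power series, Σ_{m≥0} q1^m (q3; p)_m / (p; p)_m = (q1 q3; p)_∞ / (q1; p)_∞, where (z; p)_m = Π_{s=0}^{m-1} (1 - z p^s) and (z; p)_∞ = Π_{s=0}^∞ (1 - z p^s). -/

import Mathlib

open Filter Finset Complex Topology

noncomputable def qbA (p q3 : ℂ) (m : ℕ) : ℂ :=
  (∏ s ∈ Finset.range m, (1 - q3 * p ^ s)) / (∏ s ∈ Finset.range m, (1 - p * p ^ s))

lemma one_sub_ne {w : ℂ} (h : ‖w‖ < 1) : 1 - w ≠ 0 := by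
  intro hc
  have : w = 1 := by linear_combination -hc
  simp [this] at h

lemma qb_den_factor_ne {p : ℂ} (hp : ‖p‖ < 1) (s : ℕ) : 1 - p * p ^ s ≠ 0 := by
  apply one_sub_ne
  calc ‖p * p ^ s‖ = ‖p‖ * ‖p‖ ^ s := by simp [norm_pow]
    _ ≤ ‖p‖ * 1 := by
        gcongr
        exact pow_le_one₀ (norm_nonneg p) hp.le
    _ < 1 := by simpa using hp

lemma qb_den_ne {p : ℂ} (hp : ‖p‖ < 1) (m : ℕ) :
    (∏ s ∈ Finset.range m, (1 - p * p ^ s)) ≠ 0 :=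
  Finset.prod_ne_zero_iff.2 fun s _ => qb_den_factor_ne hp s

lemma qbA_zero (p q3 : ℂ) : qbA p q3 0 = 1 := by simp [qbA]

lemma qbA_succ {p : ℂ} (q3 : ℂ) (_hp : ‖p‖ < 1) (m : ℕ) :
    qbA p q3 (m + 1) = qbA p q3 m * ((1 - q3 * p ^ m) / (1 - p * p ^ m)) := by
  unfold qbA
  rw [Finset.prod_range_succ, Finset.prod_range_succ]
  field_simp

lemma qbA_rec {p : ℂ} (q3 : ℂ) (hp : ‖p‖ < 1) (m : ℕ) :
    (1 - p * p ^ m) * qbA p q3 (m + 1) = (1 - q3 * p ^ m) * qbA p q3 m := by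
  rw [qbA_succ q3 hp m]
  field_simp [qb_den_factor_ne hp m]

lemma qb_key {p : ℂ} (q3 : ℂ) (hp : ‖p‖ < 1) {x : ℝ} (hx : x < 1) :
    ∀ᶠ m in atTop, x * (1 + ‖q3‖ * ‖p‖ ^ m) ≤ ((x + 1) / 2) * (1 - ‖p‖ ^ (m + 1)) := by
  have h0 : Tendsto (fun m : ℕ => ‖p‖ ^ m) atTop (𝓝 0) :=
    tendsto_pow_atTop_nhds_zero_of_lt_one (norm_nonneg p) hp
  have hL : Tendsto (fun m : ℕ => x * (1 + ‖q3‖ * ‖p‖ ^ m)) atTop (𝓝 x) := by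
    have := tendsto_const_nhds (x := (x : ℝ)) (f := atTop (α := ℕ)) |>.mul
      ((tendsto_const_nhds (x := (1 : ℝ))).add ((tendsto_const_nhds (x := ‖q3‖)).mul h0))
    simpa using this
  have hR : Tendsto (fun m : ℕ => ((x + 1) / 2) * (1 - ‖p‖ ^ (m + 1))) atTop
      (𝓝 ((x + 1) / 2)) := by
    have h0' : Tendsto (fun m : ℕ => ‖p‖ ^ (m + 1)) atTop (𝓝 0) :=
      h0.comp (tendsto_add_atTop_nat 1)
    have := tendsto_const_nhds (x := ((x + 1) / 2 : ℝ)) (f := atTop (α := ℕ)) |>.mul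
      ((tendsto_const_nhds (x := (1 : ℝ))).sub h0')
    simpa using this
  exact (hL.eventually_lt hR (by linarith)).mono fun m h => h.le

lemma qb_summable {p q3 : ℂ} (hp : ‖p‖ < 1) {x : ℝ} (hx0 : 0 ≤ x) (hx : x < 1) (k : ℕ) :
    Summable (fun m => x ^ m * ‖qbA p q3 (m + k)‖) := by
  apply summable_of_ratio_norm_eventually_le (r := (x + 1) / 2) (by linarith)
  filter_upwards [qb_key q3 hp hx] with m hm
  have hd : (0 : ℝ) < ‖1 - p * p ^ (m + k)‖ :=
    norm_pos_iff.2 (qb_den_factor_ne hp (m + k))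
  have hple : ‖p‖ ^ (m + k) ≤ ‖p‖ ^ m :=
    pow_le_pow_of_le_one (norm_nonneg p) hp.le (Nat.le_add_right m k)
  have hple' : ‖p‖ ^ (m + k + 1) ≤ ‖p‖ ^ (m + 1) :=
    pow_le_pow_of_le_one (norm_nonneg p) hp.le (by omega)
  have h2 : x * ‖1 - q3 * p ^ (m + k)‖ ≤ ((x + 1) / 2) * ‖1 - p * p ^ (m + k)‖ := by
    calc x * ‖1 - q3 * p ^ (m + k)‖ ≤ x * (1 + ‖q3‖ * ‖p‖ ^ m) := by
          have : ‖1 - q3 * p ^ (m + k)‖ ≤ 1 + ‖q3‖ * ‖p‖ ^ m := by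
            calc ‖1 - q3 * p ^ (m + k)‖ ≤ ‖(1 : ℂ)‖ + ‖q3 * p ^ (m + k)‖ := norm_sub_le _ _
              _ = 1 + ‖q3‖ * ‖p‖ ^ (m + k) := by simp [norm_mul, norm_pow]
              _ ≤ 1 + ‖q3‖ * ‖p‖ ^ m := by
                  have := mul_le_mul_of_nonneg_left hple (norm_nonneg q3)
                  linarith
          exact mul_le_mul_of_nonneg_left this hx0
      _ ≤ ((x + 1) / 2) * (1 - ‖p‖ ^ (m + 1)) := hm
      _ ≤ ((x + 1) / 2) * (1 - ‖p‖ ^ (m + k + 1)) := by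
          apply mul_le_mul_of_nonneg_left (by linarith) (by linarith)
      _ ≤ ((x + 1) / 2) * ‖1 - p * p ^ (m + k)‖ := by
          apply mul_le_mul_of_nonneg_left ?_ (by linarith)
          calc 1 - ‖p‖ ^ (m + k + 1) = 1 - ‖p * p ^ (m + k)‖ := by
                rw [norm_mul, norm_pow, pow_succ]; ring
            _ ≤ ‖1 - p * p ^ (m + k)‖ := by
                have := norm_sub_norm_le (1 : ℂ) (p * p ^ (m + k))
                simpa using this
  have hmk : m + 1 + k = (m + k) + 1 := by omega
  rw [Real.norm_of_nonneg (by positivity), Real.norm_of_nonneg (by positivity), hmk,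
    qbA_succ q3 hp (m + k), norm_mul, norm_div, pow_succ]
  calc x ^ m * x * (‖qbA p q3 (m + k)‖ * (‖1 - q3 * p ^ (m + k)‖ / ‖1 - p * p ^ (m + k)‖))
      = (x ^ m * ‖qbA p q3 (m + k)‖) * ((x * ‖1 - q3 * p ^ (m + k)‖) / ‖1 - p * p ^ (m + k)‖) := by
        ring
    _ ≤ (x ^ m * ‖qbA p q3 (m + k)‖) *
        ((((x + 1) / 2) * ‖1 - p * p ^ (m + k)‖) / ‖1 - p * p ^ (m + k)‖) := by
        apply mul_le_mul_of_nonneg_left ?_ (mul_nonneg (by positivity) (norm_nonneg _))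
        exact div_le_div_of_nonneg_right h2 hd.le |>.trans_eq rfl
    _ = ((x + 1) / 2) * (x ^ m * ‖qbA p q3 (m + k)‖) := by
        rw [mul_div_assoc, div_self hd.ne', mul_one]
        ring

lemma qb_summable' {p q3 : ℂ} (hp : ‖p‖ < 1) {x : ℂ} (hx : ‖x‖ < 1) :
    Summable (fun m => x ^ m * qbA p q3 m) := by
  apply Summable.of_norm
  have := qb_summable (q3 := q3) hp (norm_nonneg x) hx 0
  simpa [norm_mul, norm_pow] using this

noncomputable def qbS (p q3 x : ℂ) : ℂ := ∑' m : ℕ, x ^ m * qbA p q3 m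

lemma qb_funEq {p q3 : ℂ} (hp : ‖p‖ < 1) {x : ℂ} (hx : ‖x‖ < 1) :
    (1 - x) * qbS p q3 x = (1 - q3 * x) * qbS p q3 (p * x) := by
  have hpx : ‖p * x‖ < 1 := by
    rw [norm_mul]
    calc ‖p‖ * ‖x‖ ≤ 1 * ‖x‖ := mul_le_mul_of_nonneg_right hp.le (norm_nonneg x)
      _ < 1 := by simpa using hx
  have hs1 := qb_summable' (q3 := q3) hp hx
  have hs2 := qb_summable' (q3 := q3) hp hpx
  have hsA : Summable (fun m => (1 - p ^ m) * (x ^ m * qbA p q3 m)) := by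
    apply (hs1.sub hs2).congr
    intro m
    rw [mul_pow]
    ring
  have key : ∑' m : ℕ, (1 - p ^ m) * (x ^ m * qbA p q3 m)
      = ∑' m : ℕ, (1 - q3 * p ^ m) * (x * (x ^ m * qbA p q3 m)) := by
    rw [Summable.tsum_eq_zero_add hsA]
    simp only [pow_zero, sub_self, zero_mul, zero_add]
    exact tsum_congr fun m => by linear_combination (x ^ (m + 1)) * qbA_rec q3 hp m
  have t1 : ∑' m : ℕ, (1 - p ^ m) * (x ^ m * qbA p q3 m)
      = qbS p q3 x - qbS p q3 (p * x) := by
    rw [qbS, qbS, ← Summable.tsum_sub hs1 hs2]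
    exact tsum_congr fun m => by rw [mul_pow]; ring
  have t2 : ∑' m : ℕ, (1 - q3 * p ^ m) * (x * (x ^ m * qbA p q3 m))
      = x * qbS p q3 x - (q3 * x) * qbS p q3 (p * x) := by
    rw [qbS, qbS, ← tsum_mul_left, ← tsum_mul_left,
      ← Summable.tsum_sub (hs1.mul_left x) (hs2.mul_left (q3 * x))]
    exact tsum_congr fun m => by rw [mul_pow]; ring
  rw [t1, t2] at key
  linear_combination key

lemma qb_pow_lt {p q1 : ℂ} (hp : ‖p‖ < 1) (h1 : ‖q1‖ < 1) (n : ℕ) : ‖p ^ n * q1‖ < 1 := by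
  rw [norm_mul, norm_pow]
  calc ‖p‖ ^ n * ‖q1‖ ≤ 1 * ‖q1‖ :=
        mul_le_mul_of_nonneg_right (pow_le_one₀ (norm_nonneg p) hp.le) (norm_nonneg q1)
    _ < 1 := by simpa using h1

lemma qb_iter {p q1 q3 : ℂ} (hp : ‖p‖ < 1) (h1 : ‖q1‖ < 1) (n : ℕ) :
    qbS p q3 q1 * ∏ s ∈ Finset.range n, (1 - q1 * p ^ s)
      = (∏ s ∈ Finset.range n, (1 - q1 * q3 * p ^ s)) * qbS p q3 (p ^ n * q1) := by
  induction n with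
  | zero => simp
  | succ n ih =>
    rw [Finset.prod_range_succ, Finset.prod_range_succ, ← mul_assoc, ih]
    have hfe := qb_funEq (q3 := q3) hp (qb_pow_lt hp h1 n)
    have harg : p * (p ^ n * q1) = p ^ (n + 1) * q1 := by ring
    rw [harg] at hfe
    linear_combination (∏ s ∈ Finset.range n, (1 - q1 * q3 * p ^ s)) * hfe

lemma qb_tendsto {p q1 q3 : ℂ} (hp : ‖p‖ < 1) (h1 : ‖q1‖ < 1) :
    Tendsto (fun n => qbS p q3 (p ^ n * q1)) atTop (𝓝 1) := by
  set T := ∑' m : ℕ, ‖q1‖ ^ m * ‖qbA p q3 (m + 1)‖ with hTdef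
  have hT := qb_summable (q3 := q3) hp (norm_nonneg q1) h1 1
  have hbound : ∀ x : ℂ, ‖x‖ ≤ ‖q1‖ → ‖qbS p q3 x - 1‖ ≤ T * ‖x‖ := by
    intro x hxle
    have hx1 : ‖x‖ < 1 := lt_of_le_of_lt hxle h1
    have hs := qb_summable' (q3 := q3) hp hx1
    have h0 : qbS p q3 x = 1 + ∑' m : ℕ, x ^ (m + 1) * qbA p q3 (m + 1) := by
      rw [qbS, Summable.tsum_eq_zero_add hs]
      simp [qbA_zero]
    rw [h0, add_sub_cancel_left]
    have hterm : ∀ m : ℕ, ‖x ^ (m + 1) * qbA p q3 (m + 1)‖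
        ≤ ‖q1‖ ^ m * ‖qbA p q3 (m + 1)‖ * ‖x‖ := by
      intro m
      rw [norm_mul, norm_pow, pow_succ]
      calc ‖x‖ ^ m * ‖x‖ * ‖qbA p q3 (m + 1)‖
          ≤ ‖q1‖ ^ m * ‖x‖ * ‖qbA p q3 (m + 1)‖ := by
            have := pow_le_pow_left₀ (norm_nonneg x) hxle m
            gcongr
        _ = ‖q1‖ ^ m * ‖qbA p q3 (m + 1)‖ * ‖x‖ := by ring
    have hsn : Summable (fun m : ℕ => ‖x ^ (m + 1) * qbA p q3 (m + 1)‖) :=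
      Summable.of_nonneg_of_le (fun m => norm_nonneg _) hterm (hT.mul_right ‖x‖)
    calc ‖∑' m : ℕ, x ^ (m + 1) * qbA p q3 (m + 1)‖
        ≤ ∑' m : ℕ, ‖x ^ (m + 1) * qbA p q3 (m + 1)‖ := norm_tsum_le_tsum_norm hsn
      _ ≤ ∑' m : ℕ, ‖q1‖ ^ m * ‖qbA p q3 (m + 1)‖ * ‖x‖ :=
          Summable.tsum_le_tsum hterm hsn (hT.mul_right ‖x‖)
      _ = T * ‖x‖ := by rw [tsum_mul_right]
  have key : Tendsto (fun n => qbS p q3 (p ^ n * q1) - 1) atTop (𝓝 0) := by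
    rw [tendsto_zero_iff_norm_tendsto_zero]
    have hgeo : Tendsto (fun n : ℕ => T * (‖p‖ ^ n * ‖q1‖)) atTop (𝓝 (T * (0 * ‖q1‖))) :=
      tendsto_const_nhds.mul
        ((tendsto_pow_atTop_nhds_zero_of_lt_one (norm_nonneg p) hp).mul tendsto_const_nhds)
    rw [show T * (0 * ‖q1‖) = 0 by ring] at hgeo
    apply squeeze_zero (fun n => norm_nonneg _) ?_ hgeo
    intro n
    calc ‖qbS p q3 (p ^ n * q1) - 1‖ ≤ T * ‖p ^ n * q1‖ := by
          apply hbound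
          rw [norm_mul, norm_pow]
          calc ‖p‖ ^ n * ‖q1‖ ≤ 1 * ‖q1‖ :=
                mul_le_mul_of_nonneg_right (pow_le_one₀ (norm_nonneg p) hp.le) (norm_nonneg q1)
            _ = ‖q1‖ := one_mul _
      _ = T * (‖p‖ ^ n * ‖q1‖) := by rw [norm_mul, norm_pow]
  have := key.add_const 1
  simpa using this

lemma qb_log_summable {p : ℂ} (hp : ‖p‖ < 1) (z : ℂ) :
    Summable (fun s : ℕ => Complex.log (1 - z * p ^ s)) := by
  have h0 : Tendsto (fun s : ℕ => ‖z‖ * ‖p‖ ^ s) atTop (𝓝 (‖z‖ * 0)) :=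
    tendsto_const_nhds.mul (tendsto_pow_atTop_nhds_zero_of_lt_one (norm_nonneg p) hp)
  rw [mul_zero] at h0
  have hev : ∀ᶠ s : ℕ in atTop, ‖Complex.log (1 - z * p ^ s)‖ ≤ (3 / 2 * ‖z‖) * ‖p‖ ^ s := by
    filter_upwards [h0.eventually_lt_const (show (0 : ℝ) < 1 / 2 by norm_num)] with s hs
    have hn : ‖-(z * p ^ s)‖ ≤ 1 / 2 := by
      rw [norm_neg, norm_mul, norm_pow]; exact hs.le
    have hlog := Complex.norm_log_one_add_half_le_self hn
    rw [show (1 : ℂ) + -(z * p ^ s) = 1 - z * p ^ s by ring] at hlog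
    calc ‖Complex.log (1 - z * p ^ s)‖ ≤ 3 / 2 * ‖-(z * p ^ s)‖ := hlog
      _ = (3 / 2 * ‖z‖) * ‖p‖ ^ s := by rw [norm_neg, norm_mul, norm_pow]; ring
  exact Summable.of_norm_bounded_eventually_nat
    ((summable_geometric_of_lt_one (norm_nonneg p) hp).mul_left (3 / 2 * ‖z‖)) hev

lemma qb_mult {p : ℂ} (hp : ‖p‖ < 1) (z : ℂ) :
    Multipliable (fun s : ℕ => 1 - z * p ^ s) := by
  by_cases hz : ∀ s : ℕ, 1 - z * p ^ s ≠ 0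
  · exact Complex.multipliable_of_summable_log (qb_log_summable hp z)
  · push_neg at hz
    obtain ⟨s0, h0⟩ := hz
    refine ⟨0, ?_⟩
    have hev : ∀ᶠ t : Finset ℕ in atTop, (∏ i ∈ t, (1 - z * p ^ i)) = 0 := by
      filter_upwards [eventually_ge_atTop ({s0} : Finset ℕ)] with t ht
      exact Finset.prod_eq_zero (ht (Finset.mem_singleton_self s0)) h0
    exact Tendsto.congr' (hev.mono fun t h => h.symm) tendsto_const_nhds

lemma qb_tprod_ne {p : ℂ} (hp : ‖p‖ < 1) {z : ℂ} (hz : ‖z‖ < 1) :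
    (∏' s : ℕ, (1 - z * p ^ s)) ≠ 0 := by
  have hne : ∀ s : ℕ, (1 - z * p ^ s) ≠ 0 := by
    intro s
    apply one_sub_ne
    rw [norm_mul, norm_pow]
    calc ‖z‖ * ‖p‖ ^ s ≤ ‖z‖ * 1 :=
          mul_le_mul_of_nonneg_left (pow_le_one₀ (norm_nonneg p) hp.le) (norm_nonneg z)
      _ < 1 := by simpa using hz
  have h2 : cexp (∑' s : ℕ, Complex.log (1 - z * p ^ s)) = ∏' s : ℕ, (1 - z * p ^ s) :=
    Complex.cexp_tsum_eq_tprod hne (qb_log_summable hp z)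
  rw [← h2]
  exact Complex.exp_ne_zero _

theorem statement2 (p q1 q3 : ℂ) (hp : ‖p‖ < 1) (h1 : ‖q1‖ < 1) :
    ∑' m : ℕ,
      q1 ^ m * (∏ s ∈ Finset.range m, (1 - q3 * p ^ s)) /
        (∏ s ∈ Finset.range m, (1 - p * p ^ s)) =
    (∏' s : ℕ, (1 - q1 * q3 * p ^ s)) / (∏' s : ℕ, (1 - q1 * p ^ s)) := by
  have hS : (∑' m : ℕ,
      q1 ^ m * (∏ s ∈ Finset.range m, (1 - q3 * p ^ s)) /
        (∏ s ∈ Finset.range m, (1 - p * p ^ s))) = qbS p q3 q1 := by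
    rw [qbS]
    exact tsum_congr fun m => by rw [qbA, mul_div_assoc]
  have hP := (qb_mult hp q1).hasProd.tendsto_prod_nat
  have hQ := (qb_mult hp (q1 * q3)).hasProd.tendsto_prod_nat
  have hlim1 : Tendsto (fun n => qbS p q3 q1 * ∏ s ∈ Finset.range n, (1 - q1 * p ^ s)) atTop
      (𝓝 (qbS p q3 q1 * ∏' s : ℕ, (1 - q1 * p ^ s))) := tendsto_const_nhds.mul hP
  have hlim2 : Tendsto (fun n =>
      (∏ s ∈ Finset.range n, (1 - q1 * q3 * p ^ s)) * qbS p q3 (p ^ n * q1)) atTop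
      (𝓝 ((∏' s : ℕ, (1 - q1 * q3 * p ^ s)) * 1)) := hQ.mul (qb_tendsto hp h1)
  have hmain : qbS p q3 q1 * (∏' s : ℕ, (1 - q1 * p ^ s))
      = (∏' s : ℕ, (1 - q1 * q3 * p ^ s)) * 1 :=
    tendsto_nhds_unique (hlim1.congr fun n => qb_iter hp h1 n) hlim2
  rw [hS, eq_div_iff (qb_tprod_ne hp h1)]
  rw [mul_one] at hmain
  exact hmain
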